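/- For any three-stage SARK method with linear operators Ã, M̃₁ and coefficients satisfying all first-, second-, and third-order SARK conditions, one step of size τ is the linear map Y ↦ (I + τ Ã + (τ²/2) Ã (M̃₁ + Ã) + (τ³/6) Ã (2M̃₁ + Ã)(M̃₁ + Ã)) Y. -/

import Mathlib

/-- Propagation operator of a third-order three-stage SARK method (linear case). -/
theorem stmt17 {m : ℕ}
    (A M1 : (Fin m → ℝ) →L[ℝ] (Fin m → ℝ))
    (b : Fin 3 → ℝ) (a d : Fin 3 → Fin 3 → ℝ)
    (hlowa : ∀ i j : Fin 3, i ≤ j → a i j = 0)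
    (hlowd : ∀ i j : Fin 3, i ≤ j → d i j = 0)
    (h1 : ∑ i, b i = 1)
    (h2a : 2 * ∑ i, ∑ j ∈ Finset.Iio i, b i * a i j = 1)
    (h2d : 2 * ∑ i, ∑ j ∈ Finset.Iio i, b i * d i j = 1)
    (h3a : 3 * ∑ i, b i * (∑ j ∈ Finset.Iio i, a i j)^2 = 1)
    (h3d : 3 * ∑ i, b i * (∑ j ∈ Finset.Iio i, d i j)^2 = 1)
    (h3ad : 3 * ∑ i, b i * (∑ j ∈ Finset.Iio i, a i j) * (∑ j ∈ Finset.Iio i, d i j) = 1)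
    (h3aa : 6 * ∑ i, ∑ j ∈ Finset.Iio i, ∑ k ∈ Finset.Iio j, b i * a i j * a j k = 1)
    (h3adk : 6 * ∑ i, ∑ j ∈ Finset.Iio i, ∑ k ∈ Finset.Iio j, b i * a i j * d j k = 1)
    (h3da : 3 * ∑ i, ∑ j ∈ Finset.Iio i, ∑ k ∈ Finset.Iio j, b i * d i j * a j k = 1)
    (h3dd : 3 * ∑ i, ∑ j ∈ Finset.Iio i, ∑ k ∈ Finset.Iio j, b i * d i j * d j k = 1)
    (Y : Fin m → ℝ) (τ : ℝ) :
    let Z1 := Y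
    let Z2 := Y + τ • (d 1 0 • M1 Z1 + a 1 0 • A Z1)
    let Z3 := Y + τ • (d 2 0 • M1 Z1 + d 2 1 • M1 Z2 + a 2 0 • A Z1 + a 2 1 • A Z2)
    Y + τ • (b 0 • A Z1 + b 1 • A Z2 + b 2 • A Z3)
      = Y + τ • A Y + (τ^2 / 2) • A (M1 Y + A Y)
        + (τ^3 / 6) • A ((2:ℝ) • M1 (M1 Y + A Y) + A (M1 Y + A Y)) := by
  have hI0 : Finset.Iio (0:Fin 3) = ∅ := by decide
  have hI1 : Finset.Iio (1:Fin 3) = {0} := by decide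
  have hI2 : Finset.Iio (2:Fin 3) = ({0,1} : Finset (Fin 3)) := by decide
  simp only [Fin.sum_univ_three, hI0, hI1, hI2, Finset.sum_empty,
    Finset.sum_singleton, Finset.sum_insert (by decide : (0:Fin 3) ∉ ({1} : Finset (Fin 3)))]
    at h1 h2a h2d h3aa h3adk h3da h3dd
  intro Z1 Z2 Z3
  simp only [Z1, Z2, Z3, map_add, map_smul, smul_add, smul_smul]
  match_scalars <;>
    first
      | ring1
      | linear_combination τ * h1
      | linear_combination τ^2/2 * h2a
      | linear_combination τ^2/2 * h2d
      | linear_combination τ^3/3 * h3dd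
      | linear_combination τ^3/3 * h3da
      | linear_combination τ^3/6 * h3adk
      | linear_combination τ^3/6 * h3aa
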